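/- For every infinite subset B of 2^ℕ there exists an injective map φ : ℕ → B such that φ(F) ∈ 𝒢_n for every n ∈ ℕ and every F ∈ S_n. In particular, for every n ∈ ℕ the family 𝒢_n is n-large: for every infinite B ⊆ 2^ℕ there is an injective φ : ℕ → B with φ(F) ∈ 𝒢_n for all F ∈ S_n. -/

import Mathlib

abbrev Cantor : Type := ℕ → Bool

/- `wedgeLen σ τ` is the length `|σ∧τ| ∈ ℕ∞` of the longest common initial segment
of `σ` and `τ` (`⊤` if `σ = τ`).  Since wedges `σ∧τ`, `σ∧τ'` of a common sequence are
initial segments of that sequence, comparisons `⊑`, `⊏`, `=` between such wedges are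
equivalent to `≤`, `<`, `=` between their lengths. -/
open Classical in
noncomputable def wedgeLen (σ τ : Cantor) : ℕ∞ :=
  if h : σ = τ then ⊤ else ((Nat.find (Function.ne_iff.mp h) : ℕ) : ℕ∞)

/-- `GS n F σ m M` : the pair `(F,σ)` belongs to `𝒢ₛ_n` via a derivation attaching the
values `min(F,σ) = m` and `max(F,σ) = M`. -/
inductive GS : ℕ → Finset Cantor → Cantor → ℕ∞ → ℕ∞ → Prop
  | base (d : ℕ) (τ : Fin (d + 1) → Cantor) (σ : Cantor) (F : Finset Cantor)
      (h1 : ∀ i, σ ≠ τ i)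
      (h2 : 0 < wedgeLen σ (τ 0))
      (h3 : ∀ i j : Fin (d + 1), i < j → wedgeLen σ (τ i) < wedgeLen σ (τ j))
      (h4 : ((d + 1 : ℕ) : ℕ∞) ≤ wedgeLen σ (τ 0))
      (hF : ∀ x, x ∈ F ↔ ∃ i, x = τ i) :
      GS 1 F σ (wedgeLen σ (τ 0)) (wedgeLen σ (τ (Fin.last d)))
  | up (n : ℕ) (F : Finset Cantor) (σ : Cantor) (m M : ℕ∞) :
      GS n F σ m M → GS (n + 1) F σ m M
  | skipped (n : ℕ) (d : ℕ) (Fs : Fin (d + 1) → Finset Cantor)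
      (σs : Fin (d + 1) → Cantor) (mins maxs : Fin (d + 1) → ℕ∞)
      (σ : Cantor) (F : Finset Cantor)
      (hGS : ∀ i, GS n (Fs i) (σs i) (mins i) (maxs i))
      (hdisj : ∀ i j : Fin (d + 1), i ≠ j → ∀ x, x ∈ Fs i → x ∉ Fs j)
      (hne : ∀ i, σ ≠ σs i)
      (h0 : 0 < wedgeLen σ (σs 0))
      (hmono : ∀ i j : Fin (d + 1), i < j → wedgeLen σ (σs i) < wedgeLen σ (σs j))
      (hlt : ∀ i, wedgeLen σ (σs i) < mins i)
      (hd : ((d + 1 : ℕ) : ℕ∞) ≤ wedgeLen σ (σs 0))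
      (hF : ∀ x, x ∈ F ↔ ∃ i, x ∈ Fs i) :
      GS (n + 1) F σ (wedgeLen σ (σs 0)) (wedgeLen σ (σs (Fin.last d)))
  | attached (n : ℕ) (d : ℕ) (Fs : Fin (d + 1) → Finset Cantor)
      (mins maxs : Fin (d + 1) → ℕ∞) (σ : Cantor) (F : Finset Cantor)
      (hGS : ∀ i, GS n (Fs i) σ (mins i) (maxs i))
      (hdisj : ∀ i j : Fin (d + 1), i ≠ j → ∀ x, x ∈ Fs i → x ∉ Fs j)
      (hord : ∀ i : Fin d, maxs i.castSucc < mins i.succ)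
      (hd : ((d + 1 : ℕ) : ℕ∞) ≤ mins 0)
      (hF : ∀ x, x ∈ F ↔ ∃ i, x ∈ Fs i) :
      GS (n + 1) F σ (mins 0) (maxs (Fin.last d))

/-- The family `𝒢_n` of finite subsets of the Cantor set. -/
def Gfam (n : ℕ) : Set (Finset Cantor) :=
  {F | F = ∅ ∨ ∃ σ m M, GS n F σ m M}

/-- The Schreier families `S_n` (for `n ≥ 1`; the value at `0` is a dummy). -/
def Schreier : ℕ → Set (Finset ℕ)
  | 0 => {∅}
  | 1 => {F | ∀ k ∈ F, F.card ≤ k}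
  | (n + 2) => {F | F = ∅ ∨ ∃ d : ℕ, ∃ Fs : Fin (d + 1) → Finset ℕ,
      (∀ i, Fs i ∈ Schreier (n + 1) ∧ (Fs i).Nonempty) ∧
      (∀ i : Fin d, ∀ a ∈ Fs i.castSucc, ∀ b ∈ Fs i.succ, a < b) ∧
      (∀ k ∈ Fs 0, d + 1 ≤ k) ∧
      (∀ x, x ∈ F ↔ ∃ i, x ∈ Fs i)}


/-! ### Auxiliary definitions and lemmas -/

noncomputable def auxL (σ τ : Cantor) : ℕ := (wedgeLen σ τ).toNat

lemma wedge_eq {σ τ : Cantor} (h : σ ≠ τ) : wedgeLen σ τ = (auxL σ τ : ℕ∞) := by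
  simp [wedgeLen, auxL, h]

lemma auxL_spec {σ τ : Cantor} (h : σ ≠ τ) :
    (∀ i < auxL σ τ, σ i = τ i) ∧ σ (auxL σ τ) ≠ τ (auxL σ τ) := by
  have : auxL σ τ = Nat.find (Function.ne_iff.mp h) := by
    simp [auxL, wedgeLen, h]
  rw [this]
  refine ⟨fun i hi => ?_, Nat.find_spec (Function.ne_iff.mp h)⟩
  have := Nat.find_min (Function.ne_iff.mp h) hi
  simpa using this

lemma le_auxL {σ τ : Cantor} (h : σ ≠ τ) {n : ℕ} (hn : ∀ i < n, σ i = τ i) :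
    n ≤ auxL σ τ := by
  by_contra hc
  exact (auxL_spec h).2 (hn _ (by omega))

open Classical in
noncomputable def auxBit (S : Set Cantor) (n : ℕ) : Bool :=
  if {y ∈ S | y n = true}.Infinite then true else false

noncomputable def auxB (B : Set Cantor) : ℕ → Set Cantor
  | 0 => B
  | (n + 1) => {x ∈ auxB B n | x n = auxBit (auxB B n) n}

noncomputable def auxSig (B : Set Cantor) : Cantor := fun n => auxBit (auxB B n) n

lemma auxB_infinite {B : Set Cantor} (hB : B.Infinite) : ∀ n, (auxB B n).Infinite := by
  intro n
  induction n with
  | zero => exact hB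
  | succ n ih =>
    have hsplit : {x ∈ auxB B n | x n = true} ∪ {x ∈ auxB B n | x n = false} = auxB B n := by
      ext x; simp only [Set.mem_union, Set.mem_setOf_eq]
      constructor
      · rintro (⟨h, _⟩ | ⟨h, _⟩) <;> exact h
      · intro h; cases hx : x n <;> simp [h, hx]
    by_cases ht : {y ∈ auxB B n | y n = true}.Infinite
    · have : auxBit (auxB B n) n = true := by simp [auxBit, ht]
      show ({x ∈ auxB B n | x n = auxBit (auxB B n) n}).Infinite
      rw [this]; exact ht
    · have hf : {y ∈ auxB B n | y n = false}.Infinite := by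
        by_contra hff
        have := (Set.not_infinite.mp ht).union (Set.not_infinite.mp hff)
        rw [hsplit] at this
        exact ih this
      have : auxBit (auxB B n) n = false := by simp [auxBit, ht]
      show ({x ∈ auxB B n | x n = auxBit (auxB B n) n}).Infinite
      rw [this]; exact hf

lemma auxB_subset (B : Set Cantor) : ∀ n, auxB B n ⊆ B := by
  intro n
  induction n with
  | zero => exact fun _ h => h
  | succ n ih => exact fun x hx => ih hx.1

lemma auxB_agree (B : Set Cantor) : ∀ n, ∀ x ∈ auxB B n, ∀ i < n, x i = auxSig B i := by
  intro n
  induction n with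
  | zero => intro x _ i hi; omega
  | succ n ih =>
    rintro x ⟨hx, hb⟩ i hi
    rcases Nat.lt_succ_iff_lt_or_eq.mp hi with h | rfl
    · exact ih x hx i h
    · exact hb

section Pick
variable (B : Set Cantor) (hB : B.Infinite)

noncomputable def auxPick (m : ℕ) : Cantor :=
  (((auxB_infinite hB m).diff (Set.finite_singleton (auxSig B))).nonempty).choose

lemma auxPick_mem (m : ℕ) : auxPick B hB m ∈ auxB B m :=
  ((((auxB_infinite hB m).diff (Set.finite_singleton (auxSig B))).nonempty).choose_spec).1

lemma auxPick_ne (m : ℕ) : auxSig B ≠ auxPick B hB m := by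
  have := ((((auxB_infinite hB m).diff (Set.finite_singleton (auxSig B))).nonempty).choose_spec).2
  simp only [Set.mem_singleton_iff] at this
  exact fun h => this h.symm

noncomputable def auxM : ℕ → ℕ
  | 0 => 1
  | (k + 1) => auxL (auxSig B) (auxPick B hB (auxM k)) + 1

noncomputable def auxT (k : ℕ) : Cantor := auxPick B hB (auxM B hB k)

noncomputable def auxLk (k : ℕ) : ℕ := auxL (auxSig B) (auxT B hB k)

lemma auxT_ne (k : ℕ) : auxSig B ≠ auxT B hB k := auxPick_ne B hB _

lemma auxT_mem (k : ℕ) : auxT B hB k ∈ B := auxB_subset B _ (auxPick_mem B hB _)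

lemma auxM_le (k : ℕ) : auxM B hB k ≤ auxLk B hB k := by
  apply le_auxL (auxT_ne B hB k)
  intro i hi
  exact (auxB_agree B _ _ (auxPick_mem B hB (auxM B hB k)) i hi).symm

lemma auxM_succ (k : ℕ) : auxM B hB (k + 1) = auxLk B hB k + 1 := rfl

lemma auxLk_strictMono : StrictMono (auxLk B hB) := by
  apply strictMono_nat_of_lt_succ
  intro k
  have h1 := auxM_le B hB (k + 1)
  rw [auxM_succ] at h1
  omega

lemma auxLk_gt (k : ℕ) : k < auxLk B hB k := by
  induction k with
  | zero => have := auxM_le B hB 0; simp [auxM] at this; omega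
  | succ k ih =>
    have h1 := auxM_le B hB (k + 1)
    rw [auxM_succ] at h1
    omega

lemma auxT_inj : Function.Injective (auxT B hB) := by
  intro k j h
  have : auxLk B hB k = auxLk B hB j := by unfold auxLk; rw [h]
  exact (auxLk_strictMono B hB).injective this

lemma auxW (k : ℕ) : wedgeLen (auxSig B) (auxT B hB k) = ((auxLk B hB k : ℕ) : ℕ∞) :=
  wedge_eq (auxT_ne B hB k)

end Pick

lemma auxChain {d : ℕ} (Fs : Fin (d + 1) → Finset ℕ)
    (hnon : ∀ i, (Fs i).Nonempty)
    (hcons : ∀ i : Fin d, ∀ a ∈ Fs i.castSucc, ∀ b ∈ Fs i.succ, a < b) :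
    ∀ i j : Fin (d + 1), i < j → ∀ a ∈ Fs i, ∀ b ∈ Fs j, a < b := by
  have key : ∀ jv : ℕ, ∀ hj : jv < d + 1, ∀ i : Fin (d + 1), i.val < jv →
      ∀ a ∈ Fs i, ∀ b ∈ Fs ⟨jv, hj⟩, a < b := by
    intro jv
    induction jv with
    | zero => intro hj i hi; omega
    | succ p ih =>
      intro hj i hi a ha b hb
      have hp : p < d := by omega
      have hsucc : (⟨p + 1, hj⟩ : Fin (d + 1)) = (⟨p, hp⟩ : Fin d).succ := rfl
      rw [hsucc] at hb
      by_cases hip : i.val = p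
      · have hcast : (⟨p, hp⟩ : Fin d).castSucc = i := by
          apply Fin.ext; simp [Fin.castSucc, hip]
        rw [← hcast] at ha
        exact hcons ⟨p, hp⟩ a ha b hb
      · have hlt : i.val < p := by omega
        obtain ⟨c, hc⟩ := hnon ⟨p, by omega⟩
        have h1 := ih (by omega) i hlt a ha c hc
        have hcast : (⟨p, hp⟩ : Fin d).castSucc = (⟨p, by omega⟩ : Fin (d + 1)) := rfl
        rw [← hcast] at hc
        have h2 := hcons ⟨p, hp⟩ c hc b hb
        omega
  intro i j hij a ha b hb
  exact key j.val j.isLt i hij a ha b (by simpa using hb)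

lemma auxMain (σ : Cantor) (τ : ℕ → Cantor) (L : ℕ → ℕ)
    (hτσ : ∀ k, σ ≠ τ k) (hW : ∀ k, wedgeLen σ (τ k) = ((L k : ℕ) : ℕ∞))
    (hmono : StrictMono L) (hLk : ∀ k, k < L k) (hinj : Function.Injective τ) :
    ∀ n : ℕ, ∀ F : Finset ℕ, F ∈ Schreier (n + 1) → F.Nonempty →
      ∃ a b, a ∈ F ∧ b ∈ F ∧ (∀ k ∈ F, a ≤ k ∧ k ≤ b) ∧
        GS (n + 1) (F.map ⟨τ, hinj⟩) σ ((L a : ℕ) : ℕ∞) ((L b : ℕ) : ℕ∞) := by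
  intro n
  induction n with
  | zero =>
    intro F hF hne
    have hF1 : ∀ k ∈ F, F.card ≤ k := hF
    obtain ⟨d, hcard⟩ : ∃ d, F.card = d + 1 :=
      ⟨F.card - 1, by have := Finset.card_pos.mpr hne; omega⟩
    set e := F.orderEmbOfFin hcard with he
    have hmem : ∀ i, e i ∈ F := fun i => F.orderEmbOfFin_mem hcard i
    have hsurj : ∀ k ∈ F, ∃ i, e i = k := by
      intro k hk
      have : k ∈ Set.range e := by rw [Finset.range_orderEmbOfFin]; exact hk
      exact this
    refine ⟨e 0, e (Fin.last d), hmem 0, hmem (Fin.last d), ?_, ?_⟩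
    · intro k hk
      obtain ⟨i, rfl⟩ := hsurj k hk
      exact ⟨e.monotone (Fin.zero_le i), e.monotone (Fin.le_last i)⟩
    · have hbase := GS.base d (fun i => τ (e i)) σ (F.map ⟨τ, hinj⟩)
        (fun i => hτσ (e i))
        (by rw [hW]; have := hLk (e 0); exact_mod_cast (show 0 < L (e 0) by omega))
        (by
          intro i j hij
          rw [hW, hW]
          exact_mod_cast hmono (e.strictMono hij))
        (by
          rw [hW]
          have h1 : F.card ≤ e 0 := hF1 _ (hmem 0)
          have h2 := hLk (e 0)
          exact_mod_cast by omega)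
        (by
          intro x
          simp only [Finset.mem_map, Function.Embedding.coeFn_mk]
          constructor
          · rintro ⟨k, hk, rfl⟩
            obtain ⟨i, rfl⟩ := hsurj k hk
            exact ⟨i, rfl⟩
          · rintro ⟨i, rfl⟩
            exact ⟨e i, hmem i, rfl⟩)
      rw [hW, hW] at hbase
      exact hbase
  | succ n ih =>
    intro F hF hne
    have hF2 : F = ∅ ∨ ∃ d : ℕ, ∃ Fs : Fin (d + 1) → Finset ℕ,
        (∀ i, Fs i ∈ Schreier (n + 1) ∧ (Fs i).Nonempty) ∧
        (∀ i : Fin d, ∀ a ∈ Fs i.castSucc, ∀ b ∈ Fs i.succ, a < b) ∧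
        (∀ k ∈ Fs 0, d + 1 ≤ k) ∧
        (∀ x, x ∈ F ↔ ∃ i, x ∈ Fs i) := hF
    rcases hF2 with rfl | ⟨d, Fs, hSch, hcons, hd0, hFiff⟩
    · exact absurd rfl hne.ne_empty
    have chain := auxChain Fs (fun i => (hSch i).2) hcons
    choose a b ha hb hbound hGS using fun i => ih (Fs i) (hSch i).1 (hSch i).2
    have hmemF : ∀ i, ∀ k ∈ Fs i, k ∈ F := fun i k hk => (hFiff k).mpr ⟨i, hk⟩
    refine ⟨a 0, b (Fin.last d), hmemF 0 _ (ha 0), hmemF _ _ (hb (Fin.last d)), ?_, ?_⟩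
    · intro k hk
      obtain ⟨i, hki⟩ := (hFiff k).mp hk
      constructor
      · rcases eq_or_lt_of_le (Fin.zero_le i) with h0 | h0
        · exact (hbound 0 k (h0 ▸ hki)).1
        · exact le_of_lt (chain 0 i h0 _ (ha 0) _ hki)
      · rcases eq_or_lt_of_le (Fin.le_last i) with hl | hl
        · exact (hbound (Fin.last d) k (hl ▸ hki)).2
        · exact le_of_lt (chain i (Fin.last d) hl _ hki _ (hb (Fin.last d)))
    · exact GS.attached (n + 1) d (fun i => (Fs i).map ⟨τ, hinj⟩)
        (fun i => ((L (a i) : ℕ) : ℕ∞)) (fun i => ((L (b i) : ℕ) : ℕ∞)) σ (F.map ⟨τ, hinj⟩)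
        (fun i => hGS i)
        (by
          intro i j hij x hxi hxj
          simp only [Finset.mem_map, Function.Embedding.coeFn_mk] at hxi hxj
          obtain ⟨k, hk, rfl⟩ := hxi
          obtain ⟨k', hk', hkk⟩ := hxj
          obtain rfl := hinj hkk
          rcases lt_or_gt_of_ne hij with h | h
          · exact lt_irrefl _ (chain i j h _ hk _ hk')
          · exact lt_irrefl _ (chain j i h _ hk' _ hk))
        (by
          intro i
          have hlt : b i.castSucc < a i.succ :=
            chain i.castSucc i.succ (Fin.castSucc_lt_succ (i := i)) _ (hb _) _ (ha _)
          show ((L (b i.castSucc) : ℕ) : ℕ∞) < ((L (a i.succ) : ℕ) : ℕ∞)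
          exact_mod_cast hmono hlt)
        (by
          have h1 : d + 1 ≤ a 0 := hd0 _ (ha 0)
          have h2 := hLk (a 0)
          show ((d + 1 : ℕ) : ℕ∞) ≤ ((L (a 0) : ℕ) : ℕ∞)
          exact_mod_cast (show d + 1 ≤ L (a 0) by omega))
        (by
          intro x
          simp only [Finset.mem_map, Function.Embedding.coeFn_mk]
          constructor
          · rintro ⟨k, hk, rfl⟩
            obtain ⟨i, hki⟩ := (hFiff k).mp hk
            exact ⟨i, k, hki, rfl⟩
          · rintro ⟨i, k, hki, rfl⟩
            exact ⟨k, hmemF i k hki, rfl⟩)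

theorem Gfam_n_large (B : Set Cantor) (hB : B.Infinite) :
    ∃ φ : ℕ ↪ Cantor, (∀ k, φ k ∈ B) ∧
      ∀ n : ℕ, 1 ≤ n → ∀ F ∈ Schreier n, F.map φ ∈ Gfam n := by
  refine ⟨⟨auxT B hB, auxT_inj B hB⟩, fun k => auxT_mem B hB k, ?_⟩
  intro n hn F hF
  obtain ⟨m, rfl⟩ : ∃ m, n = m + 1 := ⟨n - 1, by omega⟩
  by_cases hne : F = ∅
  · subst hne
    left
    exact Finset.map_empty _
  · obtain ⟨a, b, _, _, _, hGS⟩ := auxMain (auxSig B) (auxT B hB) (auxLk B hB)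
      (auxT_ne B hB) (auxW B hB) (auxLk_strictMono B hB) (auxLk_gt B hB)
      (auxT_inj B hB) m F hF (Finset.nonempty_iff_ne_empty.mpr hne)
    exact Or.inr ⟨auxSig B, _, _, hGS⟩
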